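/- Let (X,d) be a metric space and f: X → X uniformly continuous, m ∈ ℕ with m ≥ 1. For every δ > 0 there exists δ' > 0 such that any two points that are (f,δ,ν)-separated are also (f^m,δ',ν)-separated; consequently Sep(f^m, δ', ν) ≥ Sep(f, δ, ν) for all ν ∈ (0,1]. -/

import Mathlib

open Filter Metric Set

/-- `Sn f δ x y n` counts the times `0 ≤ k < n` with `dist (f^[k] x) (f^[k] y) ≥ δ`. -/
noncomputable def Sn {X : Type*} [PseudoMetricSpace X] (f : X → X) (δ : ℝ) (x y : X)
    (n : ℕ) : ℕ :=
  Set.ncard {k : ℕ | k < n ∧ δ ≤ dist (f^[k] x) (f^[k] y)}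

/-- asymptotic separation frequency `limsup_n S_n(f,δ,x,y)/n`. -/
noncomputable def sepFreq {X : Type*} [PseudoMetricSpace X] (f : X → X) (δ : ℝ) (x y : X) : ℝ :=
  Filter.limsup (fun n : ℕ => (Sn f δ x y n : ℝ) / n) Filter.atTop

lemma Sn_eq_card {X : Type*} [PseudoMetricSpace X] (f : X → X) (δ : ℝ) (x y : X) (n : ℕ) :
    Sn f δ x y n = ((Finset.range n).filter (fun k => δ ≤ dist (f^[k] x) (f^[k] y))).card := by
  rw [Sn, ← Set.ncard_coe_finset]
  congr 1
  ext k
  simp [Finset.mem_filter, Finset.mem_range]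

lemma Sn_le {X : Type*} [PseudoMetricSpace X] (f : X → X) (δ : ℝ) (x y : X) (n : ℕ) :
    Sn f δ x y n ≤ n := by
  rw [Sn_eq_card]
  calc _ ≤ (Finset.range n).card := Finset.card_filter_le _ _
  _ = n := Finset.card_range n

lemma aux_uc {X : Type*} [PseudoMetricSpace X] (f : X → X) (hf : UniformContinuous f)
    (m : ℕ) {δ : ℝ} (hδ : 0 < δ) :
    ∃ δ' > (0:ℝ), ∀ i ≤ m, ∀ u v : X, dist u v < δ' → dist (f^[i] u) (f^[i] v) < δ := by
  induction m with
  | zero =>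
    exact ⟨δ, hδ, fun i hi u v h => by simp [Nat.le_zero.mp hi]; simpa using h⟩
  | succ m ih =>
    obtain ⟨δ', hδ', H⟩ := ih
    obtain ⟨η, hη, Hη⟩ := Metric.uniformContinuous_iff.mp hf δ' hδ'
    refine ⟨min δ' η, lt_min hδ' hη, ?_⟩
    intro i hi u v h
    match i with
    | 0 => exact H 0 (Nat.zero_le _) u v (h.trans_le (min_le_left _ _))
    | (j+1) =>
      rw [Function.iterate_succ_apply, Function.iterate_succ_apply]
      exact H j (Nat.succ_le_succ_iff.mp hi) _ _ (Hη (h.trans_le (min_le_right _ _)))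

lemma count_le {X : Type*} [PseudoMetricSpace X] (f : X → X) {δ δ' : ℝ} {x y : X}
    {m : ℕ} (hm : 1 ≤ m)
    (hkey : ∀ k : ℕ, δ ≤ dist (f^[k] x) (f^[k] y) →
      δ' ≤ dist (f^[m * (k / m)] x) (f^[m * (k / m)] y)) (n : ℕ) :
    Sn f δ x y n ≤ m * Sn (f^[m]) δ' x y (n / m + 1) := by
  rw [Sn_eq_card, Sn_eq_card]
  apply Finset.card_le_mul_card_image_of_maps_to (f := fun k => k / m)
  · intro k hk
    simp only [Finset.mem_filter, Finset.mem_range] at hk ⊢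
    refine ⟨Nat.lt_succ_of_le (Nat.div_le_div_right hk.1.le), ?_⟩
    have := hkey k hk.2
    rwa [Function.iterate_mul] at this
  · intro j _
    refine le_trans (Finset.card_le_card (t := Finset.Ico (m * j) (m * j + m)) ?_) (by simp)
    intro k hk
    simp only [Finset.mem_filter, Finset.mem_range, Finset.mem_Ico] at hk ⊢
    obtain ⟨-, hdiv⟩ := hk
    have hmpos : 0 < m := by omega
    constructor
    · rw [← hdiv]; exact Nat.mul_div_le k m
    · rw [← hdiv]
      have : k / m < k / m + 1 := Nat.lt_succ_self _
      calc k < m * (k / m + 1) := by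
            rw [Nat.mul_comm]
            exact Nat.lt_mul_of_div_lt this hmpos
        _ = m * (k / m) + m := by ring

lemma sepFreq_le {X : Type*} [PseudoMetricSpace X] (f : X → X) {δ δ' : ℝ} {x y : X}
    {m : ℕ} (hm : 1 ≤ m)
    (hcount : ∀ n, Sn f δ x y n ≤ m * Sn (f^[m]) δ' x y (n / m + 1)) :
    sepFreq f δ x y ≤ sepFreq (f^[m]) δ' x y := by
  set u : ℕ → ℝ := fun n => (Sn f δ x y n : ℝ) / n with hu
  set v : ℕ → ℝ := fun n => (Sn (f^[m]) δ' x y n : ℝ) / n with hv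
  have hv01 : ∀ j, 0 ≤ v j ∧ v j ≤ 1 := by
    intro j
    constructor
    · positivity
    · rcases Nat.eq_zero_or_pos j with h | h
      · simp [hv, h]
      · rw [hv, div_le_one (by exact_mod_cast h)]
        exact_mod_cast Sn_le (f^[m]) δ' x y j
  have hu0 : ∀ n, 0 ≤ u n := fun n => by positivity
  have hq : Tendsto (fun n : ℕ => n / m + 1) atTop atTop := by
    apply tendsto_atTop_atTop.mpr
    intro b
    exact ⟨b * m, fun n hn => le_trans ((Nat.le_div_iff_mul_le (by omega)).mpr hn)
      (Nat.le_succ _)⟩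
  have key : ∀ n : ℕ, 1 ≤ n → u n ≤ v (n / m + 1) + m / n := by
    intro n hn
    have hn0 : (0:ℝ) < n := by exact_mod_cast hn
    set q := n / m + 1 with hqdef
    have hq1 : (0:ℝ) < (q:ℝ) := by exact_mod_cast Nat.succ_pos (n / m)
    have hmq : (m * q : ℕ) ≤ n + m := by
      have h1 := Nat.mul_div_le n m
      have : m * q = m * (n / m) + m := by rw [hqdef]; ring
      omega
    have hmqR : ((m:ℝ) * (q:ℝ)) ≤ (n:ℝ) + m := by exact_mod_cast hmq
    have hcast : ((Sn f δ x y n : ℝ)) ≤ (m:ℝ) * (Sn (f^[m]) δ' x y q : ℝ) := by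
      exact_mod_cast hcount n
    have hvq1 : v q ≤ 1 := (hv01 q).2
    have hvq0 : 0 ≤ v q := (hv01 q).1
    have hSv : (Sn (f^[m]) δ' x y q : ℝ) = v q * q := by
      rw [hv]; field_simp
    show (Sn f δ x y n : ℝ) / n ≤ v q + (m:ℝ) / n
    rw [div_le_iff₀ hn0]
    have hmn : (v q + (m:ℝ) / n) * n = v q * n + m := by field_simp
    rw [hmn]
    rw [hSv] at hcast
    nlinarith [mul_le_mul_of_nonneg_left hmqR hvq0]
  have hu1 : ∀ n, u n ≤ 1 := by
    intro n
    rcases Nat.eq_zero_or_pos n with h | h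
    · simp [hu, h]
    · rw [hu, div_le_one (by exact_mod_cast h)]
      exact_mod_cast Sn_le f δ x y n
  have hvbdd : IsBoundedUnder (· ≤ ·) atTop v :=
    isBoundedUnder_of ⟨1, fun j => (hv01 j).2⟩
  have hucobdd : IsCoboundedUnder (· ≤ ·) (atTop : Filter ℕ) u :=
    (isBoundedUnder_of ⟨0, hu0⟩ : IsBoundedUnder (· ≥ ·) atTop u).isCobounded_le
  show limsup u atTop ≤ limsup v atTop
  refine le_of_forall_pos_le_add ?_
  intro ε hε
  set L := limsup v atTop with hL
  have hLev : ∀ᶠ j in atTop, v j < L + ε / 2 :=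
    eventually_lt_of_limsup_lt (by linarith [half_pos hε]) hvbdd
  have h1 : ∀ᶠ n in atTop, v (n / m + 1) < L + ε / 2 := hq.eventually hLev
  have h2 : ∀ᶠ n : ℕ in atTop, (m:ℝ) / n < ε / 2 :=
    (tendsto_const_div_atTop_nhds_zero_nat (m:ℝ)).eventually_lt_const (half_pos hε)
  have h3 : ∀ᶠ n : ℕ in atTop, u n ≤ L + ε := by
    filter_upwards [h1, h2, eventually_ge_atTop 1] with n hn1 hn2 hn3
    calc u n ≤ v (n / m + 1) + m / n := key n hn3
      _ ≤ (L + ε / 2) + ε / 2 := by linarith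
      _ = L + ε := by ring
  exact limsup_le_of_le hucobdd h3

/-- A set is `(f,δ,ν)`-separated if all pairs of distinct points are `(f,δ,ν)`-separated. -/
def IsSeparatedSet {X : Type*} [PseudoMetricSpace X] (f : X → X) (δ ν : ℝ) (S : Set X) : Prop :=
  ∀ x ∈ S, ∀ y ∈ S, x ≠ y → ν ≤ sepFreq f δ x y

/-- A set is `(f,δ,ν)`-spanning if every point has a companion in it with separation
frequency `< ν`. -/
def IsSpanningSet {X : Type*} [PseudoMetricSpace X] (f : X → X) (δ ν : ℝ) (S : Set X) : Prop :=
  ∀ x : X, ∃ y ∈ S, sepFreq f δ x y < ν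

/-- `SepNum f δ ν`: supremal cardinality of an `(f,δ,ν)`-separated set. -/
noncomputable def SepNum {X : Type*} [PseudoMetricSpace X] (f : X → X) (δ ν : ℝ) : ℕ∞ :=
  ⨆ (S : Set X) (_ : IsSeparatedSet f δ ν S), S.encard

/-- `SpanNum f δ ν`: minimal cardinality of an `(f,δ,ν)`-spanning set. -/
noncomputable def SpanNum {X : Type*} [PseudoMetricSpace X] (f : X → X) (δ ν : ℝ) : ℕ∞ :=
  ⨅ (S : Set X) (_ : IsSpanningSet f δ ν S), S.encard

/-- for uniformly continuous `f` and `m ≥ 1`, for every `δ > 0` there is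
`δ' > 0` such that `(f,δ,ν)`-separated points are `(f^m,δ',ν)`-separated; consequently
`Sep(f^m,δ',ν) ≥ Sep(f,δ,ν)` for all `ν ∈ (0,1]`. -/
theorem sepNum_iterate_ge {X : Type*} [MetricSpace X] (f : X → X)
    (hf : UniformContinuous f) (m : ℕ) (hm : 1 ≤ m) :
    ∀ δ > (0 : ℝ), ∃ δ' > (0 : ℝ),
      (∀ ν ∈ Set.Ioc (0 : ℝ) 1, ∀ x y : X,
        ν ≤ sepFreq f δ x y → ν ≤ sepFreq (f^[m]) δ' x y) ∧
      (∀ ν ∈ Set.Ioc (0 : ℝ) 1, SepNum f δ ν ≤ SepNum (f^[m]) δ' ν) := by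
  intro δ hδ
  obtain ⟨δ', hδ', H⟩ := aux_uc f hf m hδ
  have main : ∀ x y : X, sepFreq f δ x y ≤ sepFreq (f^[m]) δ' x y := by
    intro x y
    apply sepFreq_le f hm
    apply count_le f hm
    intro k hk
    by_contra hlt
    push_neg at hlt
    have hkm : k % m ≤ m := le_of_lt (Nat.mod_lt k (by omega))
    have h2 := H (k % m) hkm _ _ hlt
    rw [← Function.iterate_add_apply, ← Function.iterate_add_apply,
      Nat.mod_add_div k m] at h2
    linarith
  refine ⟨δ', hδ', ⟨fun ν _ x y h => h.trans (main x y), ?_⟩⟩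
  intro ν _
  rw [SepNum, SepNum]
  apply iSup₂_le
  intro S hS
  exact le_iSup₂_of_le S (fun x hx y hy hxy => (hS x hx y hy hxy).trans (main x y)) le_rfl
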